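/- Let ρ ∈ H^1(𝕋) with ρ ≥ 0 and ∫ρ = N. Define f(x) = (2π/N)∫₀ˣ ρ(s)ds and orbitals φ_k(x) = √(ρ(x)/N) · exp(i k f(x)) for k = 0,…,N−1. Then the orbitals φ_k are pairwise orthonormal in L²(𝕋). -/

import Mathlib

open MeasureTheory

/-- The Lieb orbitals `φ_k(x) = √(ρ(x)/N) exp(i k f(x))` with
`f(x) = (2π/N) ∫₀ˣ ρ`. -/
noncomputable def orbital (ρ : ℝ → ℝ) (N k : ℕ) (x : ℝ) : ℂ :=
  (Real.sqrt (ρ x / N) : ℂ) *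
    Complex.exp (Complex.I * (k : ℂ) *
      (((2 * Real.pi / N) * ∫ s in (0:ℝ)..x, ρ s : ℝ) : ℂ))

/-- The orbitals `φ_k`, `k = 0, …, N−1`, are pairwise orthonormal in L²(𝕋). -/
theorem orbitals_orthonormal (ρ : ℝ → ℝ) (N : ℕ) (hN : 0 < N)
    (hcont : Continuous ρ) (hpos : ∀ x, 0 ≤ ρ x)
    (hper : Function.Periodic ρ 1)
    (hint : (∫ x in (0:ℝ)..1, ρ x) = (N : ℝ)) :
    ∀ j ∈ Finset.range N, ∀ k ∈ Finset.range N,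
      (∫ x in (0:ℝ)..1, (starRingEnd ℂ) (orbital ρ N j x) * orbital ρ N k x) =
        if j = k then 1 else 0 := by
  intro j hj k hk
  have hNne : (N:ℝ) ≠ 0 := Nat.cast_ne_zero.mpr hN.ne'
  set c : ℝ := 2 * Real.pi / N with hc
  set F : ℝ → ℝ := fun x => ∫ s in (0:ℝ)..x, ρ s with hFdef
  have hF : ∀ x, HasDerivAt F (ρ x) x := fun x =>
    (hcont.integral_hasStrictDerivAt 0 x).hasDerivAt
  have hFcont : Continuous F :=
    continuous_iff_continuousAt.mpr fun x => (hF x).continuousAt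
  have hF0 : F 0 = 0 := intervalIntegral.integral_same
  have hF1 : F 1 = N := hint
  set m : ℤ := (k:ℤ) - (j:ℤ) with hm
  set a : ℂ := Complex.I * (m:ℂ) * (c:ℂ) with ha
  -- integrand rewrite
  have hrw : ∀ x : ℝ,
      (starRingEnd ℂ) (orbital ρ N j x) * orbital ρ N k x
        = ((ρ x / N : ℝ) : ℂ) * Complex.exp (a * ((F x : ℝ) : ℂ)) := by
    intro x
    have hsq : ((Real.sqrt (ρ x / N) : ℝ) : ℂ) * ((Real.sqrt (ρ x / N) : ℝ) : ℂ)
        = ((ρ x / N : ℝ) : ℂ) := by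
      rw [← Complex.ofReal_mul,
        Real.mul_self_sqrt (div_nonneg (hpos x) (Nat.cast_nonneg N))]
    simp only [orbital, map_mul, Complex.conj_ofReal, ← Complex.exp_conj,
      Complex.conj_I, map_natCast]
    rw [mul_mul_mul_comm, hsq, ← Complex.exp_add]
    congr 1
    simp only [ha, hm, hc, hFdef]
    push_cast
    ring
  rw [intervalIntegral.integral_congr (fun x _ => hrw x)]
  by_cases hjk : j = k
  · subst hjk
    rw [if_pos rfl]
    have ha0 : a = 0 := by simp [ha, hm]
    simp only [ha0, zero_mul, Complex.exp_zero, mul_one]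
    rw [intervalIntegral.integral_ofReal]
    have : (∫ x in (0:ℝ)..1, ρ x / N) = 1 := by
      rw [intervalIntegral.integral_div, hint, div_self hNne]
    rw [this, Complex.ofReal_one]
  · rw [if_neg hjk]
    have hmne : m ≠ 0 := sub_ne_zero.mpr (fun h => hjk (by exact_mod_cast h.symm))
    have hane : a ≠ 0 := by
      refine mul_ne_zero (mul_ne_zero Complex.I_ne_zero ?_) ?_
      · exact_mod_cast hmne
      · rw [hc]
        exact Complex.ofReal_ne_zero.mpr (div_ne_zero (by positivity) hNne)
    set G : ℝ → ℂ := fun x => Complex.exp (a * ((F x : ℝ):ℂ)) with hG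
    have hGd : ∀ x, HasDerivAt G (Complex.exp (a * ((F x:ℝ):ℂ)) * (a * ρ x)) x := by
      intro x
      exact (((hF x).ofReal_comp).const_mul a).cexp
    have hGc : Continuous G :=
      Complex.continuous_exp.comp
        (continuous_const.mul (Complex.continuous_ofReal.comp hFcont))
    have hftc : (∫ x in (0:ℝ)..1,
        Complex.exp (a * ((F x:ℝ):ℂ)) * (a * ρ x)) = G 1 - G 0 := by
      apply intervalIntegral.integral_eq_sub_of_hasDerivAt (fun x _ => hGd x)
      apply Continuous.intervalIntegrable
      exact hGc.mul (continuous_const.mul (Complex.continuous_ofReal.comp hcont))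
    have hG1 : G 1 = 1 := by
      simp only [hG, hF1, ha]
      have h2π : (c:ℝ) * (N:ℝ) = 2 * Real.pi := by rw [hc]; field_simp
      have : Complex.I * (m:ℂ) * (c:ℂ) * ((N:ℝ):ℂ) = m * (2 * Real.pi * Complex.I) := by
        rw [mul_assoc, ← Complex.ofReal_mul, h2π]
        push_cast; ring
      rw [this, Complex.exp_int_mul_two_pi_mul_I]
    have hG0 : G 0 = 1 := by simp [hG, hF0]
    have key : (∫ x in (0:ℝ)..1, ((ρ x : ℝ):ℂ) * G x) = 0 := by
      have h2 : (∫ x in (0:ℝ)..1,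
          Complex.exp (a * ((F x:ℝ):ℂ)) * (a * ρ x)) = 0 := by
        rw [hftc, hG1, hG0, sub_self]
      rw [show (fun x => Complex.exp (a * ((F x:ℝ):ℂ)) * (a * (ρ x:ℂ)))
          = fun x => a * (((ρ x:ℝ):ℂ) * G x) by funext x; simp only [hG]; ring] at h2
      rw [intervalIntegral.integral_const_mul] at h2
      exact (mul_eq_zero.mp h2).resolve_left hane
    calc (∫ x in (0:ℝ)..1, ((ρ x / N : ℝ):ℂ) * G x)
        = (∫ x in (0:ℝ)..1, ((N:ℂ))⁻¹ * (((ρ x:ℝ):ℂ) * G x)) := by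
          congr 1; funext x; push_cast; field_simp
      _ = ((N:ℂ))⁻¹ * ∫ x in (0:ℝ)..1, ((ρ x:ℝ):ℂ) * G x :=
          intervalIntegral.integral_const_mul _ _
      _ = 0 := by rw [key, mul_zero]
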